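/- Suppose $\mu_1, \mu_2, L_1, L_2 > 0$ and $\mu_{12}, L_{12} \geq 0$ satisfy $(\mu_1-\mu_2)^2 < 4\mu_{12}^2$, $(L_1-L_2)^2 < 4L_{12}^2$, and $\mu_1\mu_2 + \mu_{12}^2 \leq L_1 L_2 + L_{12}^2$. Then for the $4\times 4$ matrix $A$ with blocks $\mathrm{diag}(\mu_1, L_1)$, $\mathrm{diag}(\mu_{12}, L_{12})$, $-\mathrm{diag}(\mu_{12}, L_{12})$, $\mathrm{diag}(\mu_2, L_2)$ (in the $2\times 2$ block pattern of the paper), the ratio of the maximum to the minimum modulus of eigenvalues of $A$ equals $\sqrt{\frac{L_1 L_2 + L_{12}^2}{\mu_1\mu_2 + \mu_{12}^2}}$. -/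

import Mathlib

open Polynomial Matrix

lemma quad_root_abs (t d : ℝ) (hd : t^2 < 4*d) (z : ℂ)
    (hz : z^2 - t*z + d = 0) : ‖z‖ = Real.sqrt d := by
  have hre : (z^2 - (t:ℂ)*z + (d:ℂ)).re = 0 := by rw [hz]; simp
  have him : (z^2 - (t:ℂ)*z + (d:ℂ)).im = 0 := by rw [hz]; simp
  simp [pow_two, Complex.mul_re, Complex.mul_im, Complex.sub_re, Complex.sub_im,
    Complex.add_re, Complex.add_im] at hre him
  have hsq : z.re^2 + z.im^2 = d := by
    rcases mul_eq_zero.1 (show z.im * (2*z.re - t) = 0 by linear_combination him) with hy | hx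
    · exfalso; rw [hy] at hre; nlinarith [sq_nonneg (2*z.re - t)]
    · linear_combination (-1 : ℝ)*hre + z.re*hx
  rw [Complex.norm_def, Complex.normSq_apply, ← hsq]; ring_nf

lemma quad_root_exists (t d : ℝ) (hd : t^2 < 4*d) :
    ∃ z : ℂ, z^2 - t*z + d = 0 ∧ ‖z‖ = Real.sqrt d := by
  have h4 : (0:ℝ) ≤ d - t*t/4 := by nlinarith
  have hs : Real.sqrt (d - t*t/4) * Real.sqrt (d - t*t/4) = d - t*t/4 :=
    Real.mul_self_sqrt h4
  refine ⟨⟨t/2, Real.sqrt (d - t*t/4)⟩, ?_, ?_⟩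
  · apply Complex.ext <;>
      simp [pow_two, Complex.mul_re, Complex.mul_im] <;> nlinarith [hs]
  · rw [Complex.norm_def, Complex.normSq_apply]
    simp only
    rw [hs, show t/2*(t/2) + (d - t*t/4) = d by ring]

/-- Under the conditions `(μ₁-μ₂)² < 4μ₁₂²`, `(L₁-L₂)² < 4L₁₂²`, and
`μ₁μ₂ + μ₁₂² ≤ L₁L₂ + L₁₂²`, the ratio of the maximum to the minimum modulus
of the (complex) eigenvalues of the 4×4 matrix `A` equals
`√((L₁L₂ + L₁₂²)/(μ₁μ₂ + μ₁₂²))`. -/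
theorem stmt_10 (μ₁ μ₂ L₁ L₂ : ℝ) (μ₁₂ L₁₂ : ℝ)
    (hμ₁ : 0 < μ₁) (hμ₂ : 0 < μ₂) (hL₁ : 0 < L₁) (hL₂ : 0 < L₂)
    (hμ₁₂ : 0 ≤ μ₁₂) (hL₁₂ : 0 ≤ L₁₂)
    (hdμ : (μ₁ - μ₂) ^ 2 < 4 * μ₁₂ ^ 2) (hdL : (L₁ - L₂) ^ 2 < 4 * L₁₂ ^ 2)
    (hle : μ₁ * μ₂ + μ₁₂ ^ 2 ≤ L₁ * L₂ + L₁₂ ^ 2)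
    (A : Matrix (Fin 4) (Fin 4) ℝ)
    (hA : A = !![μ₁, 0, μ₁₂, 0;
                 0, L₁, 0, L₁₂;
                 -μ₁₂, 0, μ₂, 0;
                 0, -L₁₂, 0, L₂]) :
    sSup {r : ℝ | ∃ z : ℂ, (A.map (Complex.ofReal)).charpoly.IsRoot z ∧ r = ‖z‖} /
      sInf {r : ℝ | ∃ z : ℂ, (A.map (Complex.ofReal)).charpoly.IsRoot z ∧ r = ‖z‖} =
      Real.sqrt ((L₁ * L₂ + L₁₂ ^ 2) / (μ₁ * μ₂ + μ₁₂ ^ 2)) := by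
  set m := μ₁ * μ₂ + μ₁₂ ^ 2 with hm_def
  set l := L₁ * L₂ + L₁₂ ^ 2 with hl_def
  have hm : (μ₁ + μ₂)^2 < 4*m := by rw [hm_def]; nlinarith
  have hl : (L₁ + L₂)^2 < 4*l := by rw [hl_def]; nlinarith
  have hm0 : 0 < m := by rw [hm_def]; positivity
  have hl0 : 0 < l := lt_of_lt_of_le hm0 hle
  have heval : ∀ z : ℂ, (A.map (Complex.ofReal)).charpoly.eval z =
      (z^2 - (μ₁+μ₂)*z + m) * (z^2 - (L₁+L₂)*z + l) := by
    intro z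
    rw [Matrix.charpoly, ← Polynomial.coe_evalRingHom, RingHom.map_det]
    subst hA
    simp [Matrix.det_succ_row_zero, Fin.sum_univ_succ, charmatrix_apply, Matrix.diagonal,
      Matrix.map_apply, Fin.succAbove, hm_def, hl_def]
    push_cast
    ring
  have hset : {r : ℝ | ∃ z : ℂ, (A.map (Complex.ofReal)).charpoly.IsRoot z ∧ r = ‖z‖}
      = {Real.sqrt m, Real.sqrt l} := by
    ext r
    constructor
    · rintro ⟨z, hz, rfl⟩
      rw [Polynomial.IsRoot, heval z, mul_eq_zero] at hz
      rcases hz with hz | hz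
      · left
        exact quad_root_abs (μ₁+μ₂) m hm z (by push_cast at hz ⊢; linear_combination hz)
      · right
        exact quad_root_abs (L₁+L₂) l hl z (by push_cast at hz ⊢; linear_combination hz)
    · rintro (rfl | rfl)
      · obtain ⟨z, hz, habs⟩ := quad_root_exists (μ₁+μ₂) m hm
        exact ⟨z, by push_cast at hz
                     rw [Polynomial.IsRoot, heval z, hz, zero_mul], habs.symm⟩
      · obtain ⟨z, hz, habs⟩ := quad_root_exists (L₁+L₂) l hl
        exact ⟨z, by push_cast at hz
                     rw [Polynomial.IsRoot, heval z, hz, mul_zero], habs.symm⟩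
  rw [hset, csSup_pair, csInf_pair]
  have hmle : Real.sqrt m ≤ Real.sqrt l := Real.sqrt_le_sqrt hle
  rw [max_eq_right hmle, min_eq_left hmle,
    Real.sqrt_div hl0.le]
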